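/- Let u = (−1 + i√3)/2 ∈ ℂ, and let A = [[1,0],[−1,1]], B = [[1,u],[0,1]] in SL(2,ℂ). Then for every t ∈ ℂ with t ≠ 0: (i) det(t·B − I) = (t−1)², and (ii) det(I − t⁻¹·A·B⁻¹·A⁻¹ + A·B⁻¹·A⁻¹·B − t·B + B·A·B⁻¹·A⁻¹) = (1/t²)·(t−1)²·(t²−4t+1). Consequently the twisted Alexander invariant Δ_{K,ρ₂}(t), given as the quotient of (ii) by (i), equals (1/t²)(t²−4t+1). -/

import Mathlib

open Matrix

noncomputable def u41 : ℂ := (-1 + Complex.I * Real.sqrt 3) / 2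

noncomputable def A2 : Matrix (Fin 2) (Fin 2) ℂ := !![1, 0; -1, 1]

noncomputable def B2 : Matrix (Fin 2) (Fin 2) ℂ := !![1, u41; 0, 1]

/-- Wada's numerator `det Φ(∂r/∂a)` for the figure-eight knot in dimension 2. -/
noncomputable def num2 (t : ℂ) : ℂ :=
  det ((1 : Matrix (Fin 2) (Fin 2) ℂ) - t⁻¹ • (A2 * B2⁻¹ * A2⁻¹) +
    A2 * B2⁻¹ * A2⁻¹ * B2 - t • B2 + B2 * A2 * B2⁻¹ * A2⁻¹)

/-- Wada's denominator `det(Φ(b) − I)` for the figure-eight knot in dimension 2. -/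
noncomputable def den2 (t : ℂ) : ℂ := det (t • B2 - 1)

lemma hu : u41 ^ 2 + u41 + 1 = 0 := by
  have h3 : (Real.sqrt 3 : ℂ) ^ 2 = 3 := by
    norm_cast
    rw [Real.sq_sqrt]; norm_num
  unfold u41
  field_simp
  ring_nf
  rw [Complex.I_sq]
  linear_combination (-1:ℂ) * h3

lemma hA2inv : A2⁻¹ = !![1, 0; 1, 1] := by
  apply inv_eq_right_inv
  unfold A2
  norm_num [Matrix.mul_fin_two]
  exact Matrix.one_fin_two.symm

lemma hB2inv : B2⁻¹ = !![1, -u41; 0, 1] := by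
  apply inv_eq_right_inv
  unfold B2
  norm_num [Matrix.mul_fin_two]
  exact Matrix.one_fin_two.symm

theorem twisted_alexander_rho2 :
    (∀ t : ℂ, t ≠ 0 → den2 t = (t - 1) ^ 2) ∧
    (∀ t : ℂ, t ≠ 0 →
      num2 t = (1 / t ^ 2) * (t - 1) ^ 2 * (t ^ 2 - 4 * t + 1)) ∧
    (∀ t : ℂ, t ≠ 0 → t ≠ 1 →
      num2 t / den2 t = (1 / t ^ 2) * (t ^ 2 - 4 * t + 1)) := by
  have hden : ∀ t : ℂ, den2 t = (t - 1) ^ 2 := by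
    intro t
    unfold den2 B2
    simp [Matrix.det_fin_two, Matrix.one_fin_two]
    ring
  have hnum : ∀ t : ℂ, t ≠ 0 → num2 t = (1 / t ^ 2) * (t - 1) ^ 2 * (t ^ 2 - 4 * t + 1) := by
    intro t ht
    unfold num2
    rw [hA2inv, hB2inv]
    unfold A2 B2
    simp [Matrix.mul_fin_two, Matrix.det_fin_two, Matrix.one_fin_two, Matrix.smul_of, Matrix.smul_cons]
    field_simp
    ring_nf
    linear_combination (t^2 * (u41^2 - u41 + 1)) * hu
  refine ⟨fun t _ => hden t, hnum, fun t ht ht1 => ?_⟩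
  rw [hnum t ht, hden t]
  field_simp [sub_ne_zero.mpr ht1]
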